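/- Let G be a Lie group with a left-invariant inner metric ρ compatible with the topology and with compact closed balls, let H be a closed normal subgroup of G, and let π: G → G/H be the canonical projection. Define ρ̃(πx, πy) = inf{ρ(x·h₁, y·h₂) : h₁, h₂ ∈ H}. Then ρ̃ is a well-defined left-invariant metric on G/H compatible with the quotient topology, its open balls about the identity satisfy B̃(r) = π(B(r)), and ρ̃ is inner, i.e. B̃(r)B̃(s) = B̃(r+s) for all r, s ≥ 0. -/

import Mathlib

open Set Filter Topology Pointwise

noncomputable section

/-- The metric `ρ̃` induced on the quotient `G ⧸ H` by a metric `ρ` on `G`: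
`ρ̃(πx, πy) = inf {ρ(xh₁, yh₂) : h₁, h₂ ∈ H}`, equivalently the infimum of `ρ` over all
pairs of representatives. -/
def quotDist {G : Type*} [Group G] (H : Subgroup G) [H.Normal] (ρ : G → G → ℝ)
    (a b : G ⧸ H) : ℝ :=
  sInf {c : ℝ | ∃ x y : G, (x : G ⧸ H) = a ∧ (y : G ⧸ H) = b ∧ c = ρ x y}

/-- Values of `ρ` from `1` to points of the coset `gH`. -/
def cset {G : Type*} [Group G] (H : Subgroup G) (ρ : G → G → ℝ) (g : G) : Set ℝ :=
  {c : ℝ | ∃ h ∈ H, c = ρ 1 (g * h)}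

lemma mk_mul_mem {G : Type*} [Group G] {H : Subgroup G} {h : G}
    (hh : h ∈ H) (y : G) : ((y * h : G) : G ⧸ H) = (y : G ⧸ H) := by
  refine (QuotientGroup.eq).mpr ?_
  have : (y * h)⁻¹ * y = h⁻¹ := by group
  rw [this]; exact H.inv_mem hh

theorem statement12
    {H' : Type*} [NormedAddCommGroup H'] [NormedSpace ℝ H']
    {G : Type*} [TopologicalSpace G] [ChartedSpace H' G] [Group G]
    [LieGroup (modelWithCornersSelf ℝ H') (⊤ : ℕ∞) G]
    (ρ : G → G → ℝ)
    (heq : ∀ x y, ρ x y = 0 ↔ x = y)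
    (hsymm : ∀ x y, ρ x y = ρ y x)
    (htri : ∀ x y z, ρ x z ≤ ρ x y + ρ y z)
    (hinv : ∀ g x y, ρ (g * x) (g * y) = ρ x y)
    (hcompat : ∀ x : G, (𝓝 x).HasBasis (fun ε : ℝ => 0 < ε) fun ε => {y | ρ x y < ε})
    (hinner : ∀ r s : ℝ, 0 < r → 0 < s →
      {x : G | ρ 1 x < r} * {x : G | ρ 1 x < s} = {x : G | ρ 1 x < r + s})
    (hcpt : ∀ (x : G) (r : ℝ), IsCompact {y : G | ρ x y ≤ r})
    (H : Subgroup G) [H.Normal] (hHcl : IsClosed (H : Set G)) :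
    (∀ x y : G, quotDist H ρ (x : G ⧸ H) (y : G ⧸ H)
        = sInf {c : ℝ | ∃ h₁ ∈ H, ∃ h₂ ∈ H, c = ρ (x * h₁) (y * h₂)})
    ∧ (∀ a b : G ⧸ H, quotDist H ρ a b = 0 ↔ a = b)
    ∧ (∀ a b : G ⧸ H, quotDist H ρ a b = quotDist H ρ b a)
    ∧ (∀ a b c : G ⧸ H, quotDist H ρ a c ≤ quotDist H ρ a b + quotDist H ρ b c)
    ∧ (∀ g a b : G ⧸ H, quotDist H ρ (g * a) (g * b) = quotDist H ρ a b)
    ∧ (∀ a : G ⧸ H,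
        (𝓝 a).HasBasis (fun ε : ℝ => 0 < ε) fun ε => {b | quotDist H ρ a b < ε})
    ∧ (∀ r : ℝ, {b : G ⧸ H | quotDist H ρ 1 b < r}
        = QuotientGroup.mk '' {y : G | ρ 1 y < r})
    ∧ (∀ r s : ℝ, 0 < r → 0 < s →
        {b : G ⧸ H | quotDist H ρ 1 b < r} * {b : G ⧸ H | quotDist H ρ 1 b < s}
          = {b : G ⧸ H | quotDist H ρ 1 b < r + s}) := by
  haveI : IsTopologicalGroup G := topologicalGroup_of_lieGroup (modelWithCornersSelf ℝ H') (⊤ : ℕ∞)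
  have hN : H.Normal := inferInstance
  -- nonnegativity of ρ
  have hnn : ∀ x y, 0 ≤ ρ x y := by
    intro x y
    have h := htri x y x
    rw [(heq x x).mpr rfl, hsymm y x] at h
    linarith
  -- basic facts about cset
  have hne : ∀ g : G, (cset H ρ g).Nonempty := fun g => ⟨ρ 1 (g * 1), 1, H.one_mem, rfl⟩
  have hbdd : ∀ g : G, BddBelow (cset H ρ g) := by
    intro g
    refine ⟨0, ?_⟩
    rintro c ⟨h, hh, rfl⟩
    exact hnn _ _
  have hfnn : ∀ g : G, 0 ≤ sInf (cset H ρ g) := by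
    intro g
    refine le_csInf (hne g) ?_
    rintro c ⟨h, hh, rfl⟩
    exact hnn _ _
  have hfle : ∀ g : G, ∀ {h : G}, h ∈ H → sInf (cset H ρ g) ≤ ρ 1 (g * h) :=
    fun g h hh => csInf_le (hbdd g) ⟨_, hh, rfl⟩
  have hflt : ∀ (g : G) (r : ℝ), sInf (cset H ρ g) < r ↔ ∃ h ∈ H, ρ 1 (g * h) < r := by
    intro g r
    rw [csInf_lt_iff (hbdd g) (hne g)]
    constructor
    · rintro ⟨c, ⟨h, hh, rfl⟩, hlt⟩; exact ⟨h, hh, hlt⟩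
    · rintro ⟨h, hh, hlt⟩; exact ⟨_, ⟨h, hh, rfl⟩, hlt⟩
  -- translation identities
  have calc1 : ∀ x y h₁ h₂ : G,
      ρ (x * h₁) (y * h₂) = ρ 1 ((x⁻¹ * y) * ((y⁻¹ * x * h₁⁻¹ * x⁻¹ * y) * h₂)) := by
    intro x y h₁ h₂
    have h := hinv (x * h₁) 1 ((x * h₁)⁻¹ * (y * h₂))
    rw [mul_one, mul_inv_cancel_left] at h
    rw [h]
    congr 1
    group
  have hmem : ∀ {h₁ h₂ : G}, h₁ ∈ H → h₂ ∈ H → ∀ x y : G,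
      (y⁻¹ * x * h₁⁻¹ * x⁻¹ * y) * h₂ ∈ H := by
    intro h₁ h₂ hh₁ hh₂ x y
    refine H.mul_mem ?_ hh₂
    have e : y⁻¹ * x * h₁⁻¹ * x⁻¹ * y = (y⁻¹ * x) * h₁⁻¹ * (y⁻¹ * x)⁻¹ := by group
    rw [e]
    exact hN.conj_mem h₁⁻¹ (H.inv_mem hh₁) (y⁻¹ * x)
  have calc2 : ∀ x y h : G, ρ 1 ((x⁻¹ * y) * h) = ρ x (y * h) := by
    intro x y h
    have hcalc := hinv x 1 ((x⁻¹ * y) * h)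
    rw [mul_one] at hcalc
    rw [← hcalc]
    congr 1
    group
  -- the key set identity
  have setEq1 : ∀ x y : G,
      {c : ℝ | ∃ x' y' : G, (x' : G ⧸ H) = (x : G ⧸ H) ∧ (y' : G ⧸ H) = (y : G ⧸ H)
        ∧ c = ρ x' y'} = cset H ρ (x⁻¹ * y) := by
    intro x y
    ext c
    constructor
    · rintro ⟨x', y', hx', hy', rfl⟩
      have h₁ : x⁻¹ * x' ∈ H := QuotientGroup.eq.mp hx'.symm
      have h₂ : y⁻¹ * y' ∈ H := QuotientGroup.eq.mp hy'.symm
      refine ⟨(y⁻¹ * x * (x⁻¹ * x')⁻¹ * x⁻¹ * y) * (y⁻¹ * y'), hmem h₁ h₂ x y, ?_⟩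
      have := calc1 x y (x⁻¹ * x') (y⁻¹ * y')
      rw [mul_inv_cancel_left, mul_inv_cancel_left] at this
      exact this
    · rintro ⟨h, hh, rfl⟩
      exact ⟨x, y * h, rfl, mk_mul_mem hh y, (calc2 x y h)⟩
  have key : ∀ x y : G, quotDist H ρ (x : G ⧸ H) (y : G ⧸ H) = sInf (cset H ρ (x⁻¹ * y)) := by
    intro x y
    unfold quotDist
    rw [setEq1 x y]
  -- ball description
  have ball : ∀ (x : G) (ε : ℝ),
      {b : G ⧸ H | quotDist H ρ (x : G ⧸ H) b < ε}
        = QuotientGroup.mk '' {y : G | ρ x y < ε} := by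
    intro x ε
    ext b
    obtain ⟨y, rfl⟩ := QuotientGroup.mk_surjective b
    constructor
    · intro hb
      rw [mem_setOf_eq, key x y, hflt] at hb
      obtain ⟨h, hh, hlt⟩ := hb
      rw [calc2 x y h] at hlt
      exact ⟨y * h, hlt, mk_mul_mem hh y⟩
    · rintro ⟨z, hz, hzb⟩
      rw [mem_setOf_eq, ← hzb, key x z]
      have h1 : sInf (cset H ρ (x⁻¹ * z)) ≤ ρ 1 ((x⁻¹ * z) * 1) := hfle _ H.one_mem
      rw [calc2 x z 1, mul_one] at h1
      exact lt_of_le_of_lt h1 hz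
  -- zero characterization
  have fzero : ∀ g : G, sInf (cset H ρ g) = 0 ↔ g ∈ H := by
    intro g
    constructor
    · intro h0
      have hcl : g⁻¹ ∈ closure (H : Set G) := by
        rw [mem_closure_iff_nhds_basis (hcompat g⁻¹)]
        intro ε hε
        have : sInf (cset H ρ g) < ε := by rw [h0]; exact hε
        obtain ⟨h, hh, hlt⟩ := (hflt g ε).mp this
        refine ⟨h, hh, ?_⟩
        have hcalc := hinv g⁻¹ 1 (g * h)
        rw [mul_one, inv_mul_cancel_left] at hcalc
        rw [mem_setOf_eq, hcalc]
        exact hlt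
      rw [hHcl.closure_eq] at hcl
      simpa using H.inv_mem hcl
    · intro hg
      refine le_antisymm ?_ (hfnn g)
      have := hfle g (H.inv_mem hg)
      rw [mul_inv_cancel, (heq 1 1).mpr rfl] at this
      exact this
  -- symmetry of sInf-cset under inversion
  have fsymm : ∀ g : G, sInf (cset H ρ g) = sInf (cset H ρ g⁻¹) := by
    have hsub : ∀ g : G, cset H ρ g⁻¹ ⊆ cset H ρ g := by
      intro g
      rintro c ⟨h, hh, rfl⟩
      refine ⟨g⁻¹ * h⁻¹ * g * (g⁻¹)⁻¹ * g⁻¹ , ?_, ?_⟩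
      · have : g⁻¹ * h⁻¹ * g * (g⁻¹)⁻¹ * g⁻¹ = g⁻¹ * h⁻¹ * g := by group
        rw [this]
        simpa using Subgroup.Normal.conj_mem hN h⁻¹ (H.inv_mem hh) g⁻¹
      · have h1 := hinv (g⁻¹ * h) 1 ((g⁻¹ * h)⁻¹)
        rw [mul_one, mul_inv_cancel] at h1
        have h2 : g * (g⁻¹ * h⁻¹ * g * (g⁻¹)⁻¹ * g⁻¹) = (g⁻¹ * h)⁻¹ := by group
        rw [h2, ← h1, hsymm]
    intro g
    refine le_antisymm (le_csInf (hne _) fun c hc => csInf_le (hbdd _) (hsub g hc))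
      (le_csInf (hne _) fun c hc => csInf_le (hbdd _) ?_)
    have := hsub g⁻¹
    rw [inv_inv] at this
    exact this hc
  -- subadditivity
  have fsub : ∀ a b : G, sInf (cset H ρ (a * b)) ≤ sInf (cset H ρ a) + sInf (cset H ρ b) := by
    intro a b
    have h1 : ∀ c₁ ∈ cset H ρ a, ∀ c₂ ∈ cset H ρ b, sInf (cset H ρ (a * b)) ≤ c₁ + c₂ := by
      rintro c₁ ⟨h₁, hh₁, rfl⟩ c₂ ⟨h₂, hh₂, rfl⟩
      have hmem' : (b⁻¹ * h₁ * b) * h₂ ∈ H := by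
        refine H.mul_mem ?_ hh₂
        have := hN.conj_mem h₁ hh₁ b⁻¹
        simpa using this
      have hle := hfle (a * b) hmem'
      refine hle.trans ?_
      have htr := htri 1 (a * h₁) ((a * b) * ((b⁻¹ * h₁ * b) * h₂))
      have he : ρ (a * h₁) ((a * b) * ((b⁻¹ * h₁ * b) * h₂)) = ρ 1 (b * h₂) := by
        have hcalc := hinv (a * h₁) 1 (b * h₂)
        rw [mul_one] at hcalc
        rw [← hcalc]
        congr 1
        group
      rw [he] at htr
      exact htr
    have h2 : ∀ c₁ ∈ cset H ρ a, sInf (cset H ρ (a * b)) - c₁ ≤ sInf (cset H ρ b) := by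
      intro c₁ hc₁
      refine le_csInf (hne b) fun c₂ hc₂ => ?_
      have := h1 c₁ hc₁ c₂ hc₂
      linarith
    have h3 : sInf (cset H ρ (a * b)) - sInf (cset H ρ b) ≤ sInf (cset H ρ a) := by
      refine le_csInf (hne a) fun c₁ hc₁ => ?_
      have := h2 c₁ hc₁
      linarith
    linarith
  -- now the eight conjuncts
  refine ⟨?_, ?_, ?_, ?_, ?_, ?_, ?_, ?_⟩
  · -- conjunct 1
    intro x y
    rw [key x y]
    congr 1
    ext c
    constructor
    · rintro ⟨h, hh, rfl⟩
      exact ⟨1, H.one_mem, h, hh, by rw [mul_one]; exact (calc2 x y h)⟩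
    · rintro ⟨h₁, hh₁, h₂, hh₂, rfl⟩
      refine ⟨(y⁻¹ * x * h₁⁻¹ * x⁻¹ * y) * h₂, hmem hh₁ hh₂ x y, calc1 x y h₁ h₂⟩
  · -- conjunct 2 : eq zero iff eq
    intro a b
    obtain ⟨x, rfl⟩ := QuotientGroup.mk_surjective a
    obtain ⟨y, rfl⟩ := QuotientGroup.mk_surjective b
    rw [key x y, fzero]
    exact QuotientGroup.eq.symm
  · -- conjunct 3 : symmetry
    intro a b
    obtain ⟨x, rfl⟩ := QuotientGroup.mk_surjective a
    obtain ⟨y, rfl⟩ := QuotientGroup.mk_surjective b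
    rw [key x y, key y x, fsymm]
    congr 1
    group
  · -- conjunct 4 : triangle
    intro a b c
    obtain ⟨x, rfl⟩ := QuotientGroup.mk_surjective a
    obtain ⟨y, rfl⟩ := QuotientGroup.mk_surjective b
    obtain ⟨z, rfl⟩ := QuotientGroup.mk_surjective c
    rw [key x z, key x y, key y z]
    have := fsub (x⁻¹ * y) (y⁻¹ * z)
    have he : (x⁻¹ * y) * (y⁻¹ * z) = x⁻¹ * z := by group
    rw [he] at this
    exact this
  · -- conjunct 5 : left invariance
    intro g a b
    obtain ⟨g₀, rfl⟩ := QuotientGroup.mk_surjective g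
    obtain ⟨x, rfl⟩ := QuotientGroup.mk_surjective a
    obtain ⟨y, rfl⟩ := QuotientGroup.mk_surjective b
    rw [← QuotientGroup.mk_mul, ← QuotientGroup.mk_mul, key, key]
    congr 1
    group
  · -- conjunct 6 : topology compatibility
    intro a
    obtain ⟨x, rfl⟩ := QuotientGroup.mk_surjective a
    rw [QuotientGroup.nhds_eq]
    refine ((hcompat x).map _).congr (fun ε => Iff.rfl) fun ε hε => ?_
    exact (ball x ε).symm
  · -- conjunct 7 : balls are images
    intro r
    have h1 : (1 : G ⧸ H) = ((1 : G) : G ⧸ H) := (QuotientGroup.mk_one H).symm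
    rw [h1, ball 1 r]
  · -- conjunct 8 : innerness
    intro r s hr hs
    have h1 : (1 : G ⧸ H) = ((1 : G) : G ⧸ H) := (QuotientGroup.mk_one H).symm
    rw [h1, ball 1 r, ball 1 s, ball 1 (r + s)]
    have himg : ∀ A B : Set G,
        (QuotientGroup.mk '' A : Set (G ⧸ H)) * QuotientGroup.mk '' B
          = QuotientGroup.mk '' (A * B) := by
      intro A B
      have := Set.image_mul (s := A) (t := B) (m := QuotientGroup.mk' H)
      simpa using this.symm
    rw [himg, hinner r s hr hs]
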